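/- Let {A_i}_{i∈I} be a family of groups. Then for every j ∈ ℕ, Tor_j(*_{i∈I} A_i) equals the normal closure in the free product of ⋃_{i∈I} Tor_j(A_i), and the natural map *_{i∈I}(A_i/Tor_j(A_i)) → (*_{i∈I} A_i)/Tor_j(*_{i∈I} A_i) is an isomorphism. -/

import Mathlib

/-- Auxiliary: the iterated torsion subgroups bundled with proofs of normality. -/
def torIterAux (G : Type*) [Group G] : ℕ → {N : Subgroup G // N.Normal}
  | 0 => ⟨⊥, inferInstance⟩
  | (i + 1) =>
    let p := torIterAux G i
    haveI := p.2
    ⟨(Subgroup.normalClosure {x : G ⧸ p.1 | IsOfFinOrder x}).comap (QuotientGroup.mk' p.1),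
      Subgroup.Normal.comap Subgroup.normalClosure_normal _⟩

/-- `torIter G i` is `Tor_i(G)`: `Tor_0(G) = {e}` and `Tor_{i+1}(G)` is the preimage in `G`
of the normal closure of the set of torsion elements of `G / Tor_i(G)`. -/
def torIter (G : Type*) [Group G] (i : ℕ) : Subgroup G := (torIterAux G i).1

instance torIter_normal (G : Type*) [Group G] (i : ℕ) : (torIter G i).Normal :=
  (torIterAux G i).2

theorem torIter_succ (G : Type*) [Group G] (i : ℕ) :
    torIter G (i + 1) =
      (Subgroup.normalClosure {x : G ⧸ torIter G i | IsOfFinOrder x}).comap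
        (QuotientGroup.mk' (torIter G i)) := rfl

theorem torIter_mono (G : Type*) [Group G] : Monotone (torIter G) := by
  apply monotone_nat_of_le_succ
  intro i
  rw [torIter_succ]
  calc torIter G i = (QuotientGroup.mk' (torIter G i)).ker := (QuotientGroup.ker_mk' _).symm
    _ ≤ _ := Subgroup.ker_le_comap _ _

/-- `Tor_∞(G)`, the union of all the `Tor_i(G)`. -/
def torInf (G : Type*) [Group G] : Subgroup G := ⨆ i, torIter G i

instance torInf_normal (G : Type*) [Group G] : (torInf G).Normal := by
  constructor
  intro n hn g
  rw [torInf, Subgroup.mem_iSup_of_directed ((torIter_mono G).directed_le)] at hn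
  obtain ⟨i, hi⟩ := hn
  exact le_iSup (torIter G) i ((torIter_normal G i).conj_mem n hi g)

/-- The torsion length of `G`: the smallest `n` with `Tor_n(G) = Tor_∞(G)`, or `∞`. -/
noncomputable def torLen (G : Type*) [Group G] : ℕ∞ :=
  sInf ((↑) '' {n : ℕ | torIter G n = torInf G})

open Monoid


namespace TorIterProofAux

open Monoid CoprodI Subgroup

variable {ι : Type*} {G : ι → Type*} [∀ i, Group (G i)]

/-- product of a list of letters -/
def wprod (L : List (Σ i, G i)) : CoprodI G := (L.map fun l => CoprodI.of l.2).prod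

theorem Word.prod_eq_wprod (w : CoprodI.Word G) : w.prod = wprod w.toList := rfl

theorem wprod_append (L L' : List (Σ i, G i)) : wprod (L ++ L') = wprod L * wprod L' := by
  simp [wprod]

theorem wprod_cons (l : (Σ i, G i)) (L : List (Σ i, G i)) :
    wprod (l :: L) = CoprodI.of l.2 * wprod L := by
  simp [wprod]

theorem Word.prod_injective [DecidableEq ι] [∀ i, DecidableEq (G i)] :
    Function.Injective (CoprodI.Word.prod (M := G)) :=
  Function.LeftInverse.injective (g := CoprodI.Word.equiv)
    (fun w => CoprodI.Word.equiv.apply_symm_apply w)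

theorem wprod_pow_ne_one (L : List (Σ i, G i)) (hne : L ≠ [])
    (h1 : ∀ l ∈ L, l.2 ≠ 1) (hch : L.Chain' fun a b => a.1 ≠ b.1)
    (hcyc : (L.getLast hne).1 ≠ (L.head hne).1) (k : ℕ) :
    wprod L ^ (k + 1) ≠ 1 := by
  classical
  suffices h : ∃ w : CoprodI.Word G, w.toList.head? = L.head? ∧ w.toList ≠ [] ∧
      w.prod = wprod L ^ (k + 1) by
    obtain ⟨w, -, hwne, hwprod⟩ := h
    intro hone
    have : w = CoprodI.Word.empty := Word.prod_injective (by
      rw [hwprod, hone]; exact CoprodI.Word.prod_empty.symm)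
    exact hwne (by rw [this]; rfl)
  induction k with
  | zero => exact ⟨⟨L, h1, hch⟩, rfl, hne, by simp [Word.prod_eq_wprod]⟩
  | succ k ih =>
    obtain ⟨w, hhead, hwne, hwprod⟩ := ih
    refine ⟨⟨L ++ w.toList, ?_, ?_⟩, ?_, by simp [hne], ?_⟩
    · intro l hl
      rcases List.mem_append.mp hl with h | h
      · exact h1 l h
      · exact w.ne_one l h
    · refine List.IsChain.append hch w.chain_ne ?_
      intro x hx y hy
      rw [List.getLast?_eq_getLast hne, Option.mem_some_iff] at hx
      rw [hhead, List.head?_eq_head hne, Option.mem_some_iff] at hy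
      subst hx; subst hy
      exact hcyc
    · show (L ++ w.toList).head? = L.head?
      rcases L with - | ⟨a, L⟩
      · exact absurd rfl hne
      · rfl
    · show wprod (L ++ w.toList) = _
      rw [wprod_append, ← Word.prod_eq_wprod, hwprod, ← pow_succ']

theorem isOfFinOrder_conj {H : Type*} [Group H] {x g : H} (hx : IsOfFinOrder x) :
    IsOfFinOrder (g * x * g⁻¹) := by
  obtain ⟨n, hn, h⟩ := isOfFinOrder_iff_pow_eq_one.mp hx
  exact isOfFinOrder_iff_pow_eq_one.mpr ⟨n, hn, by
    rw [conj_pow, h, mul_one, mul_inv_cancel]⟩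

theorem isOfFinOrder_of_injective {H K : Type*} [Group H] [Group K] (f : H →* K)
    (hf : Function.Injective f) {a : H} (ha : IsOfFinOrder (f a)) : IsOfFinOrder a := by
  obtain ⟨n, hn, h⟩ := isOfFinOrder_iff_pow_eq_one.mp ha
  exact isOfFinOrder_iff_pow_eq_one.mpr ⟨n, hn, hf (by rw [map_pow, h, map_one])⟩

theorem conj_of_isOfFinOrder_aux [DecidableEq ι] [∀ i, DecidableEq (G i)] :
    ∀ (n : ℕ) (x : CoprodI G), (CoprodI.Word.equiv (M := G) x).toList.length ≤ n →
      IsOfFinOrder x →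
      x = 1 ∨ ∃ (i : ι) (g : CoprodI G) (a : G i),
        IsOfFinOrder a ∧ x = g * CoprodI.of a * g⁻¹ := by
  intro n
  induction n with
  | zero =>
    intro x hlen _
    left
    have h0 : (CoprodI.Word.equiv (M := G) x).toList = [] := List.length_eq_zero_iff.mp (by omega)
    have hx : x = (CoprodI.Word.equiv (M := G) x).prod :=
      (CoprodI.Word.equiv.symm_apply_apply x).symm
    rw [hx, Word.prod_eq_wprod, h0]; rfl
  | succ n ih =>
    intro x hlen hx
    set w := CoprodI.Word.equiv (M := G) x with hw
    have hxw : x = wprod w.toList := by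
      rw [← Word.prod_eq_wprod]
      exact (CoprodI.Word.equiv.symm_apply_apply x).symm
    rcases hL : w.toList with - | ⟨l, L⟩
    · left; rw [hxw, hL]; rfl
    have hchain : List.Chain' (fun a b : (Σ i, G i) => a.1 ≠ b.1) (l :: L) := hL ▸ w.chain_ne
    have hne1 : ∀ a ∈ l :: L, a.2 ≠ (1 : G a.1) := fun a ha => w.ne_one a (hL ▸ ha)
    by_cases hLne : L = []
    · -- singleton
      subst hLne
      right
      refine ⟨l.1, 1, l.2, ?_, by rw [hxw, hL, wprod_cons]; simp [wprod]⟩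
      refine isOfFinOrder_of_injective CoprodI.of (CoprodI.of_injective l.1) ?_
      have hxl : x = CoprodI.of l.2 := by rw [hxw, hL, wprod_cons]; simp [wprod]
      rwa [hxl] at hx
    by_cases hcyc : ((l :: L).getLast (by simp)).1 = l.1
    · -- cyclic reduction
      obtain ⟨jb, hgl⟩ : ∃ jb, L.getLast hLne = jb := ⟨_, rfl⟩
      have hgl' : (l :: L).getLast (by simp) = jb := by
        rw [← hgl]; exact List.getLast_cons hLne
      obtain ⟨j, b⟩ := jb
      have hj : j = l.1 := by rw [hgl'] at hcyc; exact hcyc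
      subst hj
      have hDL : L.dropLast ++ [⟨l.1, b⟩] = L := by
        rw [← hgl]; exact List.dropLast_append_getLast hLne
      set y := (CoprodI.of l.2)⁻¹ * x * CoprodI.of l.2 with hy
      have hxy : x = CoprodI.of l.2 * y * (CoprodI.of l.2)⁻¹ := by
        rw [hy]; group
      have hyfin : IsOfFinOrder y := by
        have := isOfFinOrder_conj (g := (CoprodI.of l.2)⁻¹) hx
        simpa using this
      have hyprod : y = wprod L.dropLast * CoprodI.of (b * l.2) := by
        rw [hy, hxw, hL, wprod_cons, ← hDL, wprod_append]
        simp [wprod, mul_assoc]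
      have hlen' : L.length ≤ n := by
        have hh : w.toList.length = L.length + 1 := by rw [hL]; simp
        omega
      have hchainL : List.Chain' (fun a b : (Σ i, G i) => a.1 ≠ b.1) L := hchain.tail
      have hchainD : List.Chain' (fun a b : (Σ i, G i) => a.1 ≠ b.1) L.dropLast := by
        rw [← hDL] at hchainL
        exact hchainL.prefix ⟨_, rfl⟩
      have hne1D : ∀ a ∈ L.dropLast, a.2 ≠ (1 : G a.1) := by
        intro a ha
        exact hne1 a (List.mem_cons_of_mem _ (hDL ▸ List.mem_append_left _ ha))
      by_cases hb1 : b * l.2 = 1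
      · have hyprod' : y = wprod L.dropLast := by
          rw [hyprod, hb1]; simp [wprod]
        have hyw : CoprodI.Word.equiv (M := G) y = ⟨L.dropLast, hne1D, hchainD⟩ := by
          have hyp : y = CoprodI.Word.prod ⟨L.dropLast, hne1D, hchainD⟩ := by
            rw [Word.prod_eq_wprod, hyprod']
          rw [hyp]
          exact CoprodI.Word.equiv.apply_symm_apply _
        have hlift := ih y (by
          rw [hyw]
          show L.dropLast.length ≤ n
          have := L.length_dropLast; omega) hyfin
        rcases hlift with h1 | ⟨i, g, a, ha, hconj⟩
        · left; rw [hxy, h1]; group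
        · right
          exact ⟨i, CoprodI.of l.2 * g, a, ha, by rw [hxy, hconj]; group⟩
      · have hne1' : ∀ a ∈ L.dropLast ++ [(⟨l.1, b * l.2⟩ : Σ i, G i)], a.2 ≠ (1 : G a.1) := by
          intro a ha
          rcases List.mem_append.mp ha with h | h
          · exact hne1D a h
          · rw [List.mem_singleton] at h; subst h; exact hb1
        have hchain' : List.Chain' (fun a b : (Σ i, G i) => a.1 ≠ b.1)
            (L.dropLast ++ [(⟨l.1, b * l.2⟩ : Σ i, G i)]) := by
          have hmap : (L.dropLast ++ [(⟨l.1, b * l.2⟩ : Σ i, G i)]).map Sigma.fst = L.map Sigma.fst := by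
            conv_rhs => rw [← hDL]
            simp
          have hchmap : List.Chain' Ne (L.map Sigma.fst) :=
            (List.isChain_map Sigma.fst).mpr hchainL
          rw [← hmap] at hchmap
          exact (List.isChain_map Sigma.fst).mp hchmap
        have hyprod' : y = wprod (L.dropLast ++ [(⟨l.1, b * l.2⟩ : Σ i, G i)]) := by
          rw [hyprod, wprod_append]; simp [wprod]
        have hyw : CoprodI.Word.equiv (M := G) y
            = ⟨L.dropLast ++ [(⟨l.1, b * l.2⟩ : Σ i, G i)], hne1', hchain'⟩ := by
          have hyp : y = CoprodI.Word.prod ⟨L.dropLast ++ [(⟨l.1, b * l.2⟩ : Σ i, G i)], hne1', hchain'⟩ := by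
            rw [Word.prod_eq_wprod, hyprod']
          rw [hyp]
          exact CoprodI.Word.equiv.apply_symm_apply _
        have hlift := ih y (by
          rw [hyw]
          show (L.dropLast ++ [(⟨l.1, b * l.2⟩ : Σ i, G i)]).length ≤ n
          have h1 := L.length_dropLast
          have h2 : L.length ≠ 0 := fun h => hLne (List.length_eq_zero_iff.mp h)
          simp only [List.length_append, List.length_singleton]
          omega) hyfin
        rcases hlift with h1 | ⟨i, g, a, ha, hconj⟩
        · left; rw [hxy, h1]; group
        · right
          exact ⟨i, CoprodI.of l.2 * g, a, ha, by rw [hxy, hconj]; group⟩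
    · -- cyclically reduced : contradiction
      exfalso
      obtain ⟨m, hm, hpow⟩ := isOfFinOrder_iff_pow_eq_one.mp hx
      obtain ⟨k, rfl⟩ : ∃ k, m = k + 1 := ⟨m - 1, by omega⟩
      refine wprod_pow_ne_one (l :: L) (by simp) hne1 hchain hcyc k ?_
      rw [← hL, ← hxw]
      exact hpow

theorem conj_of_isOfFinOrder {x : CoprodI G} (hx : IsOfFinOrder x) :
    x = 1 ∨ ∃ (i : ι) (g : CoprodI G) (a : G i),
      IsOfFinOrder a ∧ x = g * CoprodI.of a * g⁻¹ := by
  classical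
  exact conj_of_isOfFinOrder_aux _ x le_rfl hx

theorem map_normalClosure_le {H K : Type*} [Group H] [Group K] (f : H →* K) (S : Set H) :
    Subgroup.map f (Subgroup.normalClosure S) ≤ Subgroup.normalClosure (f '' S) := by
  rw [Subgroup.map_le_iff_le_comap]
  exact Subgroup.normalClosure_le_normal
    (fun x hx => Subgroup.subset_normalClosure ⟨x, hx, rfl⟩)

/-- L3: the torsion normal closure of a free product is generated by factor torsion. -/
theorem normalClosure_finOrder_coprodI :
    Subgroup.normalClosure {x : CoprodI G | IsOfFinOrder x}
      = Subgroup.normalClosure (⋃ i, CoprodI.of '' {a : G i | IsOfFinOrder a}) := by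
  apply le_antisymm
  · apply Subgroup.normalClosure_le_normal
    intro x hx
    rcases conj_of_isOfFinOrder hx with rfl | ⟨i, g, a, ha, rfl⟩
    · exact one_mem _
    · exact Subgroup.normalClosure_normal.conj_mem _
        (Subgroup.subset_normalClosure
          (Set.mem_iUnion.mpr ⟨i, Set.mem_image_of_mem CoprodI.of (show a ∈ {a : G i | IsOfFinOrder a} from ha)⟩)) g
  · apply Subgroup.normalClosure_le_normal
    intro x hx
    simp only [Set.mem_iUnion, Set.mem_image] at hx
    obtain ⟨i, a, ha, rfl⟩ := hx
    exact Subgroup.subset_normalClosure (CoprodI.of.isOfFinOrder ha)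

/-- L4: closing the generating sets under normalClosure in each factor changes nothing. -/
theorem normalClosure_iUnion_normalClosure (S : ∀ i, Set (G i)) :
    Subgroup.normalClosure (⋃ i, CoprodI.of '' ((Subgroup.normalClosure (S i) : Subgroup (G i)) : Set (G i)))
      = Subgroup.normalClosure (⋃ i, CoprodI.of '' S i) := by
  apply le_antisymm
  · apply Subgroup.normalClosure_le_normal
    intro x hx
    simp only [Set.mem_iUnion, Set.mem_image] at hx
    obtain ⟨i, a, ha, rfl⟩ := hx
    exact Subgroup.normalClosure_mono (Set.subset_iUnion (fun i => CoprodI.of '' S i) i)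
      (map_normalClosure_le _ _ (Subgroup.mem_map_of_mem _ ha))
  · exact Subgroup.normalClosure_mono (Set.iUnion_mono fun i =>
      Set.image_mono Subgroup.subset_normalClosure)

section Iso
variable (N : ∀ i, Subgroup (G i)) [∀ i, (N i).Normal]

/-- Step II: quotient of a free product by normal closure of normal subgroups of factors. -/
noncomputable def coprodIQuotientEquiv :
    CoprodI (fun i => G i ⧸ N i) ≃*
      CoprodI G ⧸ Subgroup.normalClosure (⋃ i, CoprodI.of '' ((N i : Set (G i)))) := by
  set M := Subgroup.normalClosure (⋃ i, CoprodI.of '' ((N i : Set (G i)))) with hM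
  refine MonoidHom.toMulEquiv
    (CoprodI.lift fun i => QuotientGroup.lift (N i)
      ((QuotientGroup.mk' M).comp CoprodI.of) ?_)
    (QuotientGroup.lift M (CoprodI.lift fun i =>
      (CoprodI.of (M := fun i => G i ⧸ N i)).comp (QuotientGroup.mk' (N i))) ?_) ?_ ?_
  · intro a ha
    simp only [MonoidHom.mem_ker, MonoidHom.comp_apply, QuotientGroup.mk'_apply,
      QuotientGroup.eq_one_iff]
    exact Subgroup.subset_normalClosure (Set.mem_iUnion.mpr ⟨_, ⟨a, ha, rfl⟩⟩)
  · -- M ≤ ker of the backward map on CoprodI G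
    apply Subgroup.normalClosure_le_normal
    intro x hx
    simp only [Set.mem_iUnion, Set.mem_image] at hx
    obtain ⟨i, a, ha, rfl⟩ := hx
    simp only [SetLike.mem_coe, MonoidHom.mem_ker, CoprodI.lift_of, MonoidHom.comp_apply,
      QuotientGroup.mk'_apply]
    rw [QuotientGroup.eq_one_iff (G := G i) a |>.mpr ha]
    exact map_one _
  · -- backward ∘ forward = id on CoprodI (G i ⧸ N i)
    ext i x
    simp
  · -- forward ∘ backward = id on quotient
    ext i x
    simp
    rfl

end Iso

theorem coprodIQuotientEquiv_of (N : ∀ i, Subgroup (G i)) [∀ i, (N i).Normal]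
    (i : ι) (a : G i) :
    coprodIQuotientEquiv N (CoprodI.of (QuotientGroup.mk a))
      = QuotientGroup.mk (CoprodI.of a) := by
  simp [coprodIQuotientEquiv]

/-- conjunct 2 from conjunct 1 -/
theorem iso_of_closure_eq {ι : Type*} (A : ι → Type*) [∀ i, Group (A i)] (j : ℕ)
    (h : torIter (CoprodI A) j =
      Subgroup.normalClosure (⋃ i : ι, CoprodI.of '' ((torIter (A i) j : Set (A i))))) :
    ∃ e : CoprodI (fun i => A i ⧸ torIter (A i) j) ≃*
        CoprodI A ⧸ torIter (CoprodI A) j,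
      ∀ (i : ι) (a : A i),
        e (CoprodI.of (QuotientGroup.mk a)) = QuotientGroup.mk (CoprodI.of a) := by
  refine ⟨(coprodIQuotientEquiv (fun i => torIter (A i) j)).trans
    (QuotientGroup.quotientMulEquivOfEq h.symm), ?_⟩
  intro i a
  simp only [MulEquiv.trans_apply, coprodIQuotientEquiv_of,
    QuotientGroup.quotientMulEquivOfEq_mk]

theorem conjunct1 {ι : Type*} (A : ι → Type*) [∀ i, Group (A i)] (j : ℕ) :
    torIter (CoprodI A) j =
      Subgroup.normalClosure (⋃ i : ι, CoprodI.of '' ((torIter (A i) j : Set (A i)))) := by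
  induction j with
  | zero =>
    apply le_antisymm
    · exact bot_le
    · apply Subgroup.normalClosure_le_normal
      intro x hx
      simp only [Set.mem_iUnion, Set.mem_image] at hx
      obtain ⟨i, a, ha, rfl⟩ := hx
      have : a = 1 := by simpa [torIter, torIterAux] using ha
      simp [this, torIter, torIterAux]
  | succ j ih =>
    obtain ⟨e, he⟩ := iso_of_closure_eq A j ih
    set Q := fun i => A i ⧸ torIter (A i) j with hQ
    set T' : ∀ i, Set (Q i) := fun i => {b | IsOfFinOrder b} with hT'
    set π : CoprodI A →* CoprodI Q :=
      (e.symm : (CoprodI A ⧸ torIter (CoprodI A) j) ≃* CoprodI Q).toMonoidHom.comp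
        (QuotientGroup.mk' (torIter (CoprodI A) j)) with hπ
    set RHS := Subgroup.normalClosure
      (⋃ i : ι, CoprodI.of '' ((torIter (A i) (j + 1) : Set (A i)))) with hRHS
    have hπof : ∀ (i : ι) (a : A i),
        π (CoprodI.of a) = CoprodI.of (M := Q) (QuotientGroup.mk a : Q i) := by
      intro i a
      show e.symm (QuotientGroup.mk (CoprodI.of a)) = _
      rw [← he i a, MulEquiv.symm_apply_apply]
    have hπsurj : Function.Surjective π := by
      intro y
      obtain ⟨z, hz⟩ := e.symm.surjective y
      obtain ⟨x, hx⟩ := QuotientGroup.mk'_surjective (torIter (CoprodI A) j) z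
      exact ⟨x, by simp only [hπ, MonoidHom.comp_apply, hx]; exact hz⟩
    have hπker : π.ker = torIter (CoprodI A) j := by
      ext x
      simp only [hπ, MonoidHom.mem_ker, MonoidHom.comp_apply, MulEquiv.coe_toMonoidHom]
      rw [MulEquiv.map_eq_one_iff, QuotientGroup.mk'_apply, QuotientGroup.eq_one_iff]
    -- Step A/B
    have hsets : (⇑e.symm) ⁻¹' {y : CoprodI Q | IsOfFinOrder y}
        = {x : CoprodI A ⧸ torIter (CoprodI A) j | IsOfFinOrder x} := by
      ext y
      simp only [Set.mem_preimage, Set.mem_setOf_eq]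
      constructor
      · intro h
        have := e.toMonoidHom.isOfFinOrder h
        simpa using this
      · intro h
        exact e.symm.toMonoidHom.isOfFinOrder h
    have hinner : Subgroup.normalClosure {x : CoprodI A ⧸ torIter (CoprodI A) j | IsOfFinOrder x}
        = Subgroup.comap (e.symm : (CoprodI A ⧸ torIter (CoprodI A) j) →* CoprodI Q)
            (Subgroup.normalClosure {y : CoprodI Q | IsOfFinOrder y}) := by
      rw [← Subgroup.comap_normalClosure _ e.symm, hsets]
    have hstepA : torIter (CoprodI A) (j + 1)
        = Subgroup.comap π (Subgroup.normalClosure {y : CoprodI Q | IsOfFinOrder y}) := by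
      rw [torIter_succ, hinner, Subgroup.comap_comap, hπ]
      rfl
    -- Step C
    have hmapRHS : Subgroup.map π RHS
        = Subgroup.normalClosure (⋃ i, CoprodI.of '' T' i) := by
      rw [hRHS, Subgroup.map_normalClosure _ _ hπsurj,
        ← normalClosure_iUnion_normalClosure T']
      congr 1
      rw [Set.image_iUnion]
      refine Set.iUnion_congr fun i => ?_
      rw [← Set.image_comp]
      have hfun : (π ∘ (CoprodI.of : A i →* CoprodI A))
          = (CoprodI.of : Q i →* CoprodI Q) ∘ (QuotientGroup.mk' (torIter (A i) j)) := by
        funext a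
        exact hπof i a
      rw [hfun, Set.image_comp]
      have himg : (QuotientGroup.mk' (torIter (A i) j)) ''
          ((torIter (A i) (j + 1) : Set (A i)))
          = ((Subgroup.normalClosure (T' i)) : Set (Q i)) := by
        rw [torIter_succ (A i) j, Subgroup.coe_comap,
          Set.image_preimage_eq _ (QuotientGroup.mk'_surjective _)]
      rw [himg]
    -- Step D
    have hker_le : π.ker ≤ RHS := by
      rw [hπker, ih]
      apply Subgroup.normalClosure_mono
      refine Set.iUnion_mono fun i => Set.image_mono ?_
      exact SetLike.coe_subset_coe.mpr (torIter_mono (A i) (Nat.le_succ j))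
    calc torIter (CoprodI A) (j + 1)
        = Subgroup.comap π (Subgroup.normalClosure {y : CoprodI Q | IsOfFinOrder y}) := hstepA
      _ = Subgroup.comap π (Subgroup.map π RHS) := by
          rw [hmapRHS, normalClosure_finOrder_coprodI]
      _ = RHS := Subgroup.comap_map_eq_self hker_le


end TorIterProofAux

/-- For a family of groups `{A_i}` and every `j`, `Tor_j` of the free product `*_i A_i`
equals the normal closure of `⋃_i Tor_j(A_i)` (the images of the `Tor_j(A_i)` in the free
product), and the natural map `*_i (A_i/Tor_j(A_i)) → (*_i A_i)/Tor_j(*_i A_i)` is an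
isomorphism. -/
theorem torIter_coprodI
    {ι : Type*} (A : ι → Type*) [∀ i, Group (A i)] (j : ℕ) :
    torIter (CoprodI A) j =
      Subgroup.normalClosure (⋃ i : ι, CoprodI.of '' ((torIter (A i) j : Set (A i)))) ∧
    ∃ e : CoprodI (fun i => A i ⧸ torIter (A i) j) ≃*
        CoprodI A ⧸ torIter (CoprodI A) j,
      ∀ (i : ι) (a : A i),
        e (CoprodI.of (QuotientGroup.mk a)) = QuotientGroup.mk (CoprodI.of a) :=
  ⟨TorIterProofAux.conjunct1 A j,
    TorIterProofAux.iso_of_closure_eq A j (TorIterProofAux.conjunct1 A j)⟩
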